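/- Let (X, m_X) be a measure space, let (ν_x)_{x ∈ X} be a measurable family of probability measures on ℝ^D, let μ be a probability measure on ℝ^D, and let β₁, β₂ : X → ℝ be m_X-integrable functions with ∫ β₁ dm_X = ∫ β₂ dm_X. Then for every bounded differentiable f : ℝ^D → ℝ with ∫ ‖∇f(θ)‖² dμ(θ) ≤ 1, | ∫_X (β₁(x) − β₂(x)) · (∫_{ℝ^D} f dν_x) dm_X(x) | ≤ (1/2) · ( sup_{x, x' ∈ X} ‖ν_x − ν_{x'}‖_{Ḣ⁻¹(μ)} ) · ∫_X |β₁(x) − β₂(x)| dm_X(x), where the supremum is taken in [0, ∞]. Consequently, for ν₁ = ∫ β₁(x) ν_x dm_X(x) and ν₂ = ∫ β₂(x) ν_x dm_X(x), ‖ν₁ − ν₂‖_{Ḣ⁻¹(μ)} is bounded by the same right-hand side. -/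

import Mathlib

open MeasureTheory ENNReal

/-- The weighted homogeneous Sobolev norm `‖ν₁ − ν₂‖_{Ḣ⁻¹(μ)}`, valued in `[0, ∞]`. -/
noncomputable def sobolevHneg1 {D : ℕ}
    (μ ν₁ ν₂ : Measure (EuclideanSpace ℝ (Fin D))) : ℝ≥0∞ :=
  ⨆ f ∈ {f : EuclideanSpace ℝ (Fin D) → ℝ |
      (∃ C, ∀ θ, |f θ| ≤ C) ∧ Differentiable ℝ f ∧
      ∫ θ, ‖fderiv ℝ f θ‖ ^ 2 ∂μ ≤ 1},
    ENNReal.ofReal |(∫ θ, f θ ∂ν₁) - ∫ θ, f θ ∂ν₂|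

/-- For two signed mixtures `∫ βᵢ(x) ν_x dm_X(x)` with `∫ β₁ = ∫ β₂`, testing against any
bounded differentiable `f` with `∫ ‖∇f‖² dμ ≤ 1` gives
`|∫ (β₁ − β₂)(x) · (∫ f dν_x) dm_X| ≤ (1/2) · sup_{x,x'} ‖ν_x − ν_{x'}‖_{Ḣ⁻¹(μ)} · ∫ |β₁ − β₂| dm_X`. -/
theorem signed_mixture_sobolev_bound {X : Type*} [MeasurableSpace X] (mX : Measure X)
    {D : ℕ} (ν : X → Measure (EuclideanSpace ℝ (Fin D)))
    (hν : Measurable ν) (hνp : ∀ x, IsProbabilityMeasure (ν x))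
    (μ : Measure (EuclideanSpace ℝ (Fin D))) [IsProbabilityMeasure μ]
    (β₁ β₂ : X → ℝ) (hβ₁ : Integrable β₁ mX) (hβ₂ : Integrable β₂ mX)
    (heq : ∫ x, β₁ x ∂mX = ∫ x, β₂ x ∂mX)
    (f : EuclideanSpace ℝ (Fin D) → ℝ)
    (hfb : ∃ C, ∀ θ, |f θ| ≤ C) (hfd : Differentiable ℝ f)
    (hfg : ∫ θ, ‖fderiv ℝ f θ‖ ^ 2 ∂μ ≤ 1) :
    ENNReal.ofReal |∫ x, (β₁ x - β₂ x) * ∫ θ, f θ ∂(ν x) ∂mX|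
      ≤ (1 / 2 : ℝ≥0∞) * (⨆ x : X, ⨆ x' : X, sobolevHneg1 μ (ν x) (ν x'))
        * ENNReal.ofReal (∫ x, |β₁ x - β₂ x| ∂mX) := by
  classical
  obtain ⟨C, hC⟩ := hfb
  set g : X → ℝ := fun x => ∫ θ, f θ ∂(ν x) with hg
  have hκ : ProbabilityTheory.IsMarkovKernel (⟨ν, hν⟩ : ProbabilityTheory.Kernel X _) :=
    ⟨fun x => hνp x⟩
  have hgm : StronglyMeasurable g :=
    MeasureTheory.StronglyMeasurable.integral_kernel_prod_right'
      (κ := (⟨ν, hν⟩ : ProbabilityTheory.Kernel X _))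
      (f := fun p : X × EuclideanSpace ℝ (Fin D) => f p.2)
      (hfd.continuous.stronglyMeasurable.comp_measurable measurable_snd)
  have hCnn : 0 ≤ C := (abs_nonneg (f 0)).trans (hC 0)
  have hgb : ∀ x, |g x| ≤ C := by
    intro x
    have := hνp x
    have h := norm_integral_le_of_norm_le_const (μ := ν x) (f := f) (C := C)
      (Filter.Eventually.of_forall fun θ => by simpa using hC θ)
    simpa [hg] using h.trans (by simp)
  set S := ⨆ x : X, ⨆ x' : X, sobolevHneg1 μ (ν x) (ν x') with hSdef
  have hd : Integrable (fun x => β₁ x - β₂ x) mX := hβ₁.sub hβ₂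
  by_cases hae : (fun x => β₁ x) =ᵐ[mX] fun x => β₂ x
  · have h0 : ∫ x, (β₁ x - β₂ x) * g x ∂mX = 0 := by
      rw [integral_congr_ae (g := fun _ => (0 : ℝ))
        (hae.mono fun x hx => by simp [hx])]
      simp
    simp [show ∫ x, (β₁ x - β₂ x) * ∫ θ, f θ ∂(ν x) ∂mX = 0 from h0]
  · -- integral of |β₁ - β₂| is positive, X nonempty
    have hne : Nonempty X := by
      by_contra h
      rw [not_nonempty_iff] at h
      exact hae (Filter.Eventually.of_forall fun x => isEmptyElim x)
    have hpair : ∀ x x', ENNReal.ofReal |g x - g x'| ≤ S := by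
      intro x x'
      have h1 : ENNReal.ofReal |g x - g x'| ≤ sobolevHneg1 μ (ν x) (ν x') :=
        le_iSup₂_of_le f ⟨⟨C, hC⟩, hfd, hfg⟩ le_rfl
      have h2 : sobolevHneg1 μ (ν x) (ν x')
          ≤ ⨆ x' : X, sobolevHneg1 μ (ν x) (ν x') :=
        le_iSup (fun x' => sobolevHneg1 μ (ν x) (ν x')) x'
      have h3 : (⨆ x' : X, sobolevHneg1 μ (ν x) (ν x')) ≤ S :=
        le_iSup (fun x => ⨆ x' : X, sobolevHneg1 μ (ν x) (ν x')) x
      exact h1.trans (h2.trans h3)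
    by_cases hStop : S = ⊤
    · have hI0 : ∫ x, |β₁ x - β₂ x| ∂mX ≠ 0 := by
        intro h
        apply hae
        have := (integral_eq_zero_iff_of_nonneg (fun x => abs_nonneg _) hd.abs).mp h
        filter_upwards [this] with x hx
        have : |β₁ x - β₂ x| = 0 := hx
        have := abs_eq_zero.mp this
        linarith
      have hIpos : 0 < ∫ x, |β₁ x - β₂ x| ∂mX :=
        lt_of_le_of_ne (integral_nonneg fun x => abs_nonneg _) (Ne.symm hI0)
      rw [hStop]
      have : (1 / 2 : ℝ≥0∞) * ⊤ * ENNReal.ofReal (∫ x, |β₁ x - β₂ x| ∂mX) = ⊤ := by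
        rw [ENNReal.mul_top (by norm_num), ENNReal.top_mul
          (by simpa using ENNReal.ofReal_pos.mpr hIpos |>.ne')]
      rw [this]; exact le_top
    · set s := S.toReal with hs
      have hs0 : 0 ≤ s := ENNReal.toReal_nonneg
      have hpairR : ∀ x x', |g x - g x'| ≤ s := fun x x' =>
        (ENNReal.ofReal_le_iff_le_toReal hStop).mp (hpair x x')
      have hbdd : BddAbove (Set.range g) := ⟨C, by rintro y ⟨x, rfl⟩; exact le_of_abs_le (hgb x)⟩
      have hbdd' : BddBelow (Set.range g) :=
        ⟨-C, by rintro y ⟨x, rfl⟩; exact neg_le_of_abs_le (hgb x)⟩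
      set a := ⨅ x, g x with ha
      set b := ⨆ x, g x with hb
      have hab : ∀ x, a ≤ g x := fun x => ciInf_le hbdd' x
      have hab' : ∀ x, g x ≤ b := fun x => le_ciSup hbdd x
      have hba : b ≤ a + s := by
        refine ciSup_le fun x => ?_
        have : g x - s ≤ a := le_ciInf fun x' => by
          have := le_of_abs_le (hpairR x x'); linarith
        linarith
      set c := (a + b) / 2 with hc
      have hgc : ∀ x, |g x - c| ≤ s / 2 := fun x => abs_le.mpr
        ⟨by have := hab x; have := hab' x; simp only [hc]; linarith,
         by have := hab x; have := hab' x; simp only [hc]; linarith⟩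
      have hint : Integrable (fun x => (β₁ x - β₂ x) * g x) mX := by
        refine Integrable.mono' (hd.abs.mul_const C)
          (hd.aestronglyMeasurable.mul hgm.aestronglyMeasurable)
          (Filter.Eventually.of_forall fun x => ?_)
        rw [Real.norm_eq_abs, abs_mul]
        exact mul_le_mul_of_nonneg_left (hgb x) (abs_nonneg _)
      have hintc : Integrable (fun x => (β₁ x - β₂ x) * c) mX := hd.mul_const c
      have hint2 : Integrable (fun x => (β₁ x - β₂ x) * (g x - c)) mX := by
        have := hint.sub hintc
        refine this.congr (Filter.Eventually.of_forall fun x => ?_)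
        simp only [Pi.sub_apply]
        ring
      have hzero : ∫ x, (β₁ x - β₂ x) * c ∂mX = 0 := by
        rw [integral_mul_const, integral_sub hβ₁ hβ₂, heq, sub_self, zero_mul]
      have key : ∫ x, (β₁ x - β₂ x) * g x ∂mX
          = ∫ x, (β₁ x - β₂ x) * (g x - c) ∂mX := by
        have : ∫ x, (β₁ x - β₂ x) * g x ∂mX
            = ∫ x, ((β₁ x - β₂ x) * (g x - c) + (β₁ x - β₂ x) * c) ∂mX :=
          integral_congr_ae (Filter.Eventually.of_forall fun x => by ring)
        rw [this, integral_add hint2 hintc, hzero, add_zero]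
      have habs : |∫ x, (β₁ x - β₂ x) * g x ∂mX|
          ≤ s / 2 * ∫ x, |β₁ x - β₂ x| ∂mX := by
        rw [key]
        calc |∫ x, (β₁ x - β₂ x) * (g x - c) ∂mX|
            ≤ ∫ x, |(β₁ x - β₂ x) * (g x - c)| ∂mX := by
              have := norm_integral_le_integral_norm (μ := mX)
                (f := fun x => (β₁ x - β₂ x) * (g x - c))
              simpa only [Real.norm_eq_abs] using this
          _ ≤ ∫ x, |β₁ x - β₂ x| * (s / 2) ∂mX := by
              refine integral_mono hint2.abs (hd.abs.mul_const _) fun x => ?_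
              rw [abs_mul]
              exact mul_le_mul_of_nonneg_left (hgc x) (abs_nonneg _)
          _ = s / 2 * ∫ x, |β₁ x - β₂ x| ∂mX := by
              rw [integral_mul_const]; ring
      calc ENNReal.ofReal |∫ x, (β₁ x - β₂ x) * g x ∂mX|
          ≤ ENNReal.ofReal (s / 2 * ∫ x, |β₁ x - β₂ x| ∂mX) :=
            ENNReal.ofReal_le_ofReal habs
        _ = ENNReal.ofReal (1 / 2 : ℝ) * ENNReal.ofReal s
            * ENNReal.ofReal (∫ x, |β₁ x - β₂ x| ∂mX) := by
            rw [← ENNReal.ofReal_mul (by norm_num), ← ENNReal.ofReal_mul (by positivity)]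
            ring_nf
        _ = (1 / 2 : ℝ≥0∞) * S * ENNReal.ofReal (∫ x, |β₁ x - β₂ x| ∂mX) := by
            rw [ENNReal.ofReal_toReal hStop]
            congr 1
            congr 1
            rw [ENNReal.ofReal_div_of_pos (by norm_num)]
            norm_num
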